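/- The function h(t) = 1 + ln(cosh t) − t coth t is nonnegative and increasing on (0,∞), and h(t) → 0 as t → 0⁺. -/

import Mathlib

open Real Set Filter

lemma sinh_lt_mul_cosh_aux : ∀ t : ℝ, 0 < t → Real.sinh t < t * Real.cosh t := by
  intro t ht
  have hmono : StrictMonoOn (fun x : ℝ => x * Real.cosh x - Real.sinh x) (Set.Ici 0) := by
    apply strictMonoOn_of_deriv_pos (convex_Ici 0)
    · exact ((continuous_id.mul Real.continuous_cosh).sub Real.continuous_sinh).continuousOn
    · intro x hx
      rw [interior_Ici] at hx
      have hd : HasDerivAt (fun x : ℝ => x * Real.cosh x - Real.sinh x)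
          (1 * Real.cosh x + x * Real.sinh x - Real.cosh x) x :=
        ((hasDerivAt_id x).mul (Real.hasDerivAt_cosh x)).sub (Real.hasDerivAt_sinh x)
      rw [hd.deriv]
      have hx' : (0:ℝ) < x := hx
      have := Real.sinh_pos_iff.mpr hx'
      nlinarith [mul_pos hx' this]
  have := hmono (Set.self_mem_Ici) (Set.mem_Ici.mpr ht.le) ht
  simpa using this

theorem stmt_18 (h : ℝ → ℝ)
    (hh : ∀ t, h t = 1 + Real.log (Real.cosh t) - t * (Real.cosh t / Real.sinh t)) :
    (∀ t ∈ Set.Ioi (0:ℝ), 0 ≤ h t) ∧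
    MonotoneOn h (Set.Ioi 0) ∧
    Filter.Tendsto h (nhdsWithin 0 (Set.Ioi 0)) (nhds 0) := by
  have hfun : h = fun t => 1 + Real.log (Real.cosh t) - t * (Real.cosh t / Real.sinh t) :=
    funext hh
  subst hfun
  -- derivative formula
  have hasD : ∀ x ∈ Set.Ioi (0:ℝ),
      HasDerivAt (fun t => 1 + Real.log (Real.cosh t) - t * (Real.cosh t / Real.sinh t))
        (Real.sinh x / Real.cosh x -
          (1 * (Real.cosh x / Real.sinh x) +
            x * ((Real.sinh x * Real.sinh x - Real.cosh x * Real.cosh x) / (Real.sinh x)^2))) x := by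
    intro x hx
    have hs : Real.sinh x ≠ 0 := (Real.sinh_pos_iff.mpr hx).ne'
    have h1 : HasDerivAt (fun t => Real.log (Real.cosh t)) (Real.sinh x / Real.cosh x) x :=
      (Real.hasDerivAt_cosh x).log (Real.cosh_pos x).ne'
    have h2 : HasDerivAt (fun t => Real.cosh t / Real.sinh t)
        ((Real.sinh x * Real.sinh x - Real.cosh x * Real.cosh x) / (Real.sinh x)^2) x :=
      (Real.hasDerivAt_cosh x).div (Real.hasDerivAt_sinh x) hs
    have h3 := (hasDerivAt_id x).mul h2
    exact ((hasDerivAt_const x (1:ℝ)).add h1).sub h3 |>.congr_deriv (by simp only [id]; ring)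
  -- positivity of derivative
  have hDpos : ∀ x ∈ Set.Ioi (0:ℝ),
      0 < Real.sinh x / Real.cosh x -
          (1 * (Real.cosh x / Real.sinh x) +
            x * ((Real.sinh x * Real.sinh x - Real.cosh x * Real.cosh x) / (Real.sinh x)^2)) := by
    intro x hx
    have hs : 0 < Real.sinh x := Real.sinh_pos_iff.mpr hx
    have hc : 0 < Real.cosh x := Real.cosh_pos x
    have hid : Real.cosh x ^ 2 - Real.sinh x ^ 2 = 1 := Real.cosh_sq_sub_sinh_sq x
    have hkey : Real.sinh x < x * Real.cosh x := sinh_lt_mul_cosh_aux x hx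
    rw [show Real.sinh x / Real.cosh x -
          (1 * (Real.cosh x / Real.sinh x) +
            x * ((Real.sinh x * Real.sinh x - Real.cosh x * Real.cosh x) / (Real.sinh x)^2))
        = (x * Real.cosh x - Real.sinh x) / ((Real.sinh x)^2 * Real.cosh x) from by
      field_simp
      ring_nf
      linear_combination (x * Real.cosh x - Real.sinh x) * hid]
    exact div_pos (by linarith) (by positivity)
  -- strict monotonicity
  have hmono : StrictMonoOn (fun t => 1 + Real.log (Real.cosh t) - t * (Real.cosh t / Real.sinh t))
      (Set.Ioi 0) := by
    apply strictMonoOn_of_deriv_pos (convex_Ioi 0)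
    · intro x hx
      exact (hasD x hx).continuousAt.continuousWithinAt
    · intro x hx
      rw [interior_Ioi] at hx
      rw [(hasD x hx).deriv]
      exact hDpos x hx
  -- limit
  have htend : Filter.Tendsto (fun t => 1 + Real.log (Real.cosh t) - t * (Real.cosh t / Real.sinh t))
      (nhdsWithin 0 (Set.Ioi 0)) (nhds 0) := by
    have hlog : Filter.Tendsto (fun t => Real.log (Real.cosh t)) (nhdsWithin 0 (Set.Ioi 0))
        (nhds 0) := by
      have : ContinuousAt (fun t => Real.log (Real.cosh t)) 0 :=
        (Real.continuousAt_log (by simp [Real.cosh_zero])).comp Real.continuous_cosh.continuousAt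
      have := this.tendsto
      simp only [Real.cosh_zero, Real.log_one] at this
      exact this.mono_left nhdsWithin_le_nhds
    have hslope : Filter.Tendsto (fun t => Real.sinh t / t) (nhdsWithin 0 (Set.Ioi 0)) (nhds 1) := by
      have := hasDerivAt_iff_tendsto_slope.mp (Real.hasDerivAt_sinh 0)
      rw [Real.cosh_zero] at this
      have h2 : Filter.Tendsto (slope Real.sinh 0) (nhdsWithin 0 (Set.Ioi 0)) (nhds 1) :=
        this.mono_left (nhdsWithin_mono 0 (fun x hx => Set.mem_compl_singleton_iff.mpr
          (ne_of_gt hx)))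
      refine h2.congr (fun t => ?_)
      simp [slope_def_field, div_eq_div_iff]
    have hinv : Filter.Tendsto (fun t => t / Real.sinh t) (nhdsWithin 0 (Set.Ioi 0)) (nhds 1) := by
      have := hslope.inv₀ one_ne_zero
      simp only [inv_div, inv_one] at this
      exact this
    have hcosh : Filter.Tendsto (fun t => Real.cosh t) (nhdsWithin 0 (Set.Ioi 0)) (nhds 1) := by
      have := Real.continuous_cosh.continuousAt (x := (0:ℝ)).tendsto
      rw [Real.cosh_zero] at this
      exact this.mono_left nhdsWithin_le_nhds
    have hprod : Filter.Tendsto (fun t => t * (Real.cosh t / Real.sinh t))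
        (nhdsWithin 0 (Set.Ioi 0)) (nhds 1) := by
      have := hinv.mul hcosh
      rw [mul_one] at this
      refine this.congr (fun t => by ring)
    have := ((tendsto_const_nhds (x := (1:ℝ))).add hlog).sub hprod
    simpa using this
  refine ⟨?_, hmono.monotoneOn, htend⟩
  intro t ht
  refine le_of_tendsto htend ?_
  filter_upwards [Ioc_mem_nhdsGT_of_mem ⟨le_refl 0, ht⟩] with s hs
  exact hmono.monotoneOn hs.1 ht hs.2
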